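/- Let Z be a commutative ring and E a (possibly noncommutative) Z-algebra that is finitely generated as a Z-module. For every unit u of E there exist an integer d ≥ 1 and elements b₀, b₁, …, b_{d−1} ∈ Z with b₀ a unit of Z such that u^d + b_{d−1}·u^{d−1} + ⋯ + b₁·u + b₀·1 = 0 in E. Equivalently, every invertible element of E is annihilated by a monic polynomial over Z whose constant coefficient is a unit of Z. -/

import Mathlib

open Polynomial

/-- The algebraic core of Lemma 6.1: if `E` is an algebra over a commutative ring `Z`
that is finitely generated as a `Z`-module, then every unit `u` of `E` is annihilated
by a monic polynomial over `Z` of degree `d ≥ 1` whose constant coefficient is a unit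
of `Z`. -/
theorem unit_satisfies_monic_poly_with_unit_constant
    (Z : Type*) [CommRing Z] (E : Type*) [Ring E] [Algebra Z E]
    [Module.Finite Z E] (u : Eˣ) :
    ∃ (d : ℕ) (b : ℕ → Z), 1 ≤ d ∧ IsUnit (b 0) ∧
      (u : E) ^ d + ∑ k ∈ Finset.range d, b k • (u : E) ^ k = 0 := by
  rcases subsingleton_or_nontrivial Z with hZ | hZ
  · have : Subsingleton E := Module.subsingleton Z E
    exact ⟨1, fun _ => 1, le_refl 1, isUnit_one, Subsingleton.elim _ _⟩
  obtain ⟨p₀, hp₀m, hp₀⟩ := IsIntegral.of_finite Z (u : E)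
  obtain ⟨q₀, hq₀m, hq₀⟩ := IsIntegral.of_finite Z ((u⁻¹ : Eˣ) : E)
  set p : Z[X] := p₀ * X with hp_def
  set q : Z[X] := q₀ * X with hq_def
  have hpm : p.Monic := hp₀m.mul monic_X
  have hqm : q.Monic := hq₀m.mul monic_X
  have hp : aeval (u : E) p = 0 := by
    rw [hp_def, map_mul, aeval_def, hp₀, zero_mul]
  have hq : aeval ((u⁻¹ : Eˣ) : E) q = 0 := by
    rw [hq_def, map_mul, aeval_def, hq₀, zero_mul]
  have hd1 : 1 ≤ p.natDegree := by
    rw [hp_def, hp₀m.natDegree_mul monic_X, natDegree_X]; omega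
  have he1 : 1 ≤ q.natDegree := by
    rw [hq_def, hq₀m.natDegree_mul monic_X, natDegree_X]; omega
  set e : ℕ := q.natDegree with he_def
  -- The "reversed" polynomial of q, annihilating u with constant coefficient 1
  set h : Z[X] := ∑ i ∈ Finset.range (e + 1), C (q.coeff i) * X ^ (e - i) with hh_def
  have hpow : ∀ i ∈ Finset.range (e + 1),
      ((u⁻¹ : Eˣ) : E) ^ i * (u : E) ^ e = (u : E) ^ (e - i) := by
    intro i hi
    rw [Finset.mem_range] at hi
    have : (u : E) ^ e = (u : E) ^ (e - i) * (u : E) ^ i := by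
      rw [← pow_add, Nat.sub_add_cancel (by omega)]
    rw [this, ← mul_assoc]
    have : ((u⁻¹ : Eˣ) : E) ^ i * (u : E) ^ (e - i) =
        (u : E) ^ (e - i) * ((u⁻¹ : Eˣ) : E) ^ i := by
      exact ((Commute.units_inv_left (Commute.refl (u : E))).pow_pow _ _)
    rw [this, mul_assoc]
    rw [← Units.val_pow_eq_pow_val u⁻¹ i, ← Units.val_pow_eq_pow_val u i, ← Units.val_mul,
      inv_pow, inv_mul_cancel, Units.val_one, mul_one]
  have hhu : aeval (u : E) h = 0 := by
    have key : aeval (u : E) h = aeval ((u⁻¹ : Eˣ) : E) q * (u : E) ^ e := by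
      rw [hh_def, map_sum, aeval_eq_sum_range' (n := e + 1) (by omega) ((u⁻¹ : Eˣ) : E),
        Finset.sum_mul]
      refine Finset.sum_congr rfl fun i hi => ?_
      rw [map_mul, aeval_C, map_pow, aeval_X, Algebra.smul_def, mul_assoc, hpow i hi]
    rw [key, hq, zero_mul]
  have hh0 : h.coeff 0 = 1 := by
    rw [hh_def, finset_sum_coeff]
    rw [Finset.sum_eq_single e]
    · simp [Nat.sub_self, ← hqm.leadingCoeff]
      rfl
    · intro i hi hne
      rw [Finset.mem_range] at hi
      rw [coeff_C_mul, coeff_X_pow, if_neg (by omega), mul_zero]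
    · intro habs
      exact absurd (Finset.self_mem_range_succ e) habs
  have hhdeg : h.degree ≤ (e : WithBot ℕ) := by
    refine (degree_sum_le _ _).trans ?_
    rw [Finset.sup_le_iff]
    intro i hi
    exact (degree_C_mul_X_pow_le _ _).trans (by exact_mod_cast Nat.cast_le.mpr (Nat.sub_le e i))
  set f : Z[X] := p * X ^ e + h with hf_def
  have hpXe : (p * X ^ e).Monic := hpm.mul (monic_X_pow e)
  have hdeg_lt : h.degree < (p * X ^ e).degree := by
    have h2 : (p * X ^ e).degree = ((p.natDegree + e : ℕ) : WithBot ℕ) := by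
      rw [degree_eq_natDegree hpXe.ne_zero, hpm.natDegree_mul (monic_X_pow e), natDegree_X_pow]
    rw [h2]
    refine lt_of_le_of_lt hhdeg ?_
    exact_mod_cast Nat.lt_add_of_pos_left hd1
  have hfm : f.Monic := hpXe.add_of_left hdeg_lt
  have hfdeg : f.natDegree = p.natDegree + e := by
    rw [hf_def, natDegree_add_eq_left_of_degree_lt hdeg_lt,
      hpm.natDegree_mul (monic_X_pow e), natDegree_X_pow]
  have hf0 : f.coeff 0 = 1 := by
    rw [hf_def, coeff_add, coeff_mul_X_pow', if_neg (by omega), hh0, zero_add]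
  have hfu : aeval (u : E) f = 0 := by
    rw [hf_def, map_add, map_mul, hp, zero_mul, zero_add, hhu]
  refine ⟨f.natDegree, f.coeff, by omega, hf0 ▸ isUnit_one, ?_⟩
  have hsum := aeval_eq_sum_range (p := f) (u : E)
  rw [hfu, Finset.sum_range_succ, hfm.coeff_natDegree, one_smul] at hsum
  rw [add_comm] at hsum
  exact hsum.symm
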